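/- Fix q with 1 < q < 2, a relaxation interval ε = [ε₋, ε₊] with 0 < ε₋ ≤ ε₊ < ∞, and let Ω ⊂ ℝ^d be a measurable set of finite Lebesgue measure. Let σ_ε, τ ∈ L²(Ω; ℝ^d) satisfy the Euler–Lagrange orthogonality ∫_Ω A*_ε(σ_ε)·(τ - σ_ε) dx = 0 (which holds when σ_ε minimizes J*_ε over an affine constraint set containing τ). Then J*_ε(τ) - J*_ε(σ_ε) ≤ ∫_Ω (A*_ε(τ) - A*_ε(σ_ε))·(τ - σ_ε) dx, and there exist constants 0 < c ≤ C < ∞ depending solely on q (independent of ε) such that ∫_Ω (A*_ε(τ) - A*_ε(σ_ε))·(τ - σ_ε) dx ≤ C ∫_Ω |V*_ε(τ) - V*_ε(σ_ε)|² dx and c ∫_Ω |V*_ε(τ) - V*_ε(σ_ε)|² dx ≤ J*_ε(τ) - J*_ε(σ_ε). -/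

import Mathlib

open Real MeasureTheory
open scoped RealInnerProductSpace

/-- The relaxed integrand `κ*_ε`. -/
noncomputable def kappaStar (q em ep t : ℝ) : ℝ :=
  if t ≤ em then (1/2) * em ^ (q-2) * t^2 + (1/q - 1/2) * em ^ q
  else if t ≤ ep then (1/q) * t ^ q
  else (1/2) * ep ^ (q-2) * t^2 + (1/q - 1/2) * ep ^ q

/-- The relaxed dual energy `J*_ε(τ) = ∫_Ω κ*_ε(|τ|) dx`. -/
noncomputable def Jeps (q em ep : ℝ) {d : ℕ} (Ω : Set (EuclideanSpace ℝ (Fin d)))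
    (τ : EuclideanSpace ℝ (Fin d) → EuclideanSpace ℝ (Fin d)) : ℝ :=
  ∫ x in Ω, kappaStar q em ep ‖τ x‖

/-- `A*_ε(P) = clamp_ε(|P|)^(q-2) P`. -/
noncomputable def Astar (q em ep : ℝ) {d : ℕ} (P : EuclideanSpace ℝ (Fin d)) :
    EuclideanSpace ℝ (Fin d) :=
  (max em (min ‖P‖ ep)) ^ (q-2) • P

/-- `V*_ε(P) = clamp_ε(|P|)^((q-2)/2) P`. -/
noncomputable def Vstar (q em ep : ℝ) {d : ℕ} (P : EuclideanSpace ℝ (Fin d)) :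
    EuclideanSpace ℝ (Fin d) :=
  (max em (min ‖P‖ ep)) ^ ((q-2)/2) • P

section Stmt9AuxSection

namespace Stmt9Aux

noncomputable def gc (em ep t : ℝ) : ℝ := max em (min t ep)
noncomputable def aF (q em ep t : ℝ) : ℝ := gc em ep t ^ (q-2)
noncomputable def bF (q em ep t : ℝ) : ℝ := gc em ep t ^ ((q-2)/2)
noncomputable def psiF (q em ep t : ℝ) : ℝ := aF q em ep t * t
noncomputable def chiF (q em ep t : ℝ) : ℝ := bF q em ep t * t

variable {q em ep : ℝ}

lemma gc_pos (hem : 0 < em) (t : ℝ) : 0 < gc em ep t :=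
  lt_of_lt_of_le hem (le_max_left _ _)

lemma gc_mono : Monotone (gc em ep) := fun s t hst =>
  max_le_max le_rfl (min_le_min hst le_rfl)

lemma aF_pos (hem : 0 < em) (t : ℝ) : 0 < aF q em ep t :=
  Real.rpow_pos_of_pos (gc_pos hem t) _

lemma bF_pos (hem : 0 < em) (t : ℝ) : 0 < bF q em ep t :=
  Real.rpow_pos_of_pos (gc_pos hem t) _

lemma aF_anti (hq2 : q < 2) (hem : 0 < em) {s t : ℝ} (hst : s ≤ t) :
    aF q em ep t ≤ aF q em ep s :=
  Real.rpow_le_rpow_of_nonpos (gc_pos hem s) (gc_mono hst) (by linarith)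

lemma bF_anti (hq2 : q < 2) (hem : 0 < em) {s t : ℝ} (hst : s ≤ t) :
    bF q em ep t ≤ bF q em ep s :=
  Real.rpow_le_rpow_of_nonpos (gc_pos hem s) (gc_mono hst) (by linarith)

lemma gc_ratio (hem : 0 < em) (hee : em ≤ ep) {t s : ℝ} (ht : 0 < t) (hts : t ≤ s) :
    t * gc em ep s ≤ s * gc em ep t := by
  rcases le_or_gt s ep with hsep | hsep
  · have hgs : gc em ep s = max em s := by rw [gc, min_eq_left hsep]
    have hgt : gc em ep t = max em t := by rw [gc, min_eq_left (hts.trans hsep)]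
    rcases le_total s em with hsm | hsm
    · rw [hgs, max_eq_left hsm, hgt, max_eq_left (hts.trans hsm)]
      exact mul_le_mul_of_nonneg_right hts hem.le
    · rw [hgs, max_eq_right hsm, hgt, mul_comm]
      exact mul_le_mul_of_nonneg_left (le_max_right _ _) (ht.le.trans hts)
  · have hgs : gc em ep s = ep := by
      rw [gc, min_eq_right hsep.le, max_eq_right hee]
    rcases le_total ep t with hpt | hpt
    · have hgt : gc em ep t = ep := by
        rw [gc, min_eq_right hpt, max_eq_right hee]
      rw [hgs, hgt]; exact mul_le_mul_of_nonneg_right hts (hem.le.trans hee)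
    · have hgt : t ≤ gc em ep t := by
        rw [gc, min_eq_left hpt]; exact le_max_right _ _
      rw [hgs]
      calc t * ep ≤ t * s := mul_le_mul_of_nonneg_left hsep.le ht.le
        _ = s * t := mul_comm _ _
        _ ≤ s * gc em ep t := mul_le_mul_of_nonneg_left hgt (ht.le.trans hts)

lemma gc_scale (hem : 0 < em) (hee : em ≤ ep) {v u : ℝ} (hv : 0 < v) (hvu : v ≤ u) :
    (v/u) * gc em ep u ≤ gc em ep v := by
  have hu : 0 < u := hv.trans_le hvu
  have := gc_ratio (em := em) (ep := ep) hem hee hv hvu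
  rw [div_mul_eq_mul_div, div_le_iff₀ hu]
  linarith [this]

lemma aF_scale (hq2 : q < 2) (hem : 0 < em) (hee : em ≤ ep) {v u : ℝ} (hv : 0 < v)
    (hvu : v ≤ u) : aF q em ep v ≤ (v/u) ^ (q-2) * aF q em ep u := by
  have hu : 0 < u := hv.trans_le hvu
  have h1 : 0 < (v/u) * gc em ep u := mul_pos (div_pos hv hu) (gc_pos hem u)
  calc aF q em ep v ≤ ((v/u) * gc em ep u) ^ (q-2) :=
        Real.rpow_le_rpow_of_nonpos h1 (gc_scale hem hee hv hvu) (by linarith)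
    _ = (v/u) ^ (q-2) * aF q em ep u := by
        rw [Real.mul_rpow (div_pos hv hu).le (gc_pos hem u).le]; rfl

lemma bF_scale (hq2 : q < 2) (hem : 0 < em) (hee : em ≤ ep) {v u : ℝ} (hv : 0 < v)
    (hvu : v ≤ u) : bF q em ep v ≤ (v/u) ^ ((q-2)/2) * bF q em ep u := by
  have hu : 0 < u := hv.trans_le hvu
  have h1 : 0 < (v/u) * gc em ep u := mul_pos (div_pos hv hu) (gc_pos hem u)
  calc bF q em ep v ≤ ((v/u) * gc em ep u) ^ ((q-2)/2) :=
        Real.rpow_le_rpow_of_nonpos h1 (gc_scale hem hee hv hvu) (by linarith)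
    _ = (v/u) ^ ((q-2)/2) * bF q em ep u := by
        rw [Real.mul_rpow (div_pos hv hu).le (gc_pos hem u).le]; rfl

lemma bF_sq (hem : 0 < em) (t : ℝ) : bF q em ep t * bF q em ep t = aF q em ep t := by
  rw [bF, aF, ← Real.rpow_add (gc_pos hem t)]; ring_nf

/-- S6 lower bound for ψ. -/
lemma psi_lower (hq1 : 1 < q) (hq2 : q < 2) (hem : 0 < em) (hee : em ≤ ep)
    {v u : ℝ} (hv : 0 ≤ v) (hvu : v ≤ u) :
    (q-1) * aF q em ep u * (u - v) ≤ psiF q em ep u - psiF q em ep v := by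
  rcases eq_or_lt_of_le hv with hv0 | hv0
  · rw [← hv0, psiF, psiF, mul_zero]
    have hu : 0 ≤ u := hv0.symm ▸ (hv0 ▸ hvu)
    nlinarith [aF_pos (q := q) (ep := ep) hem u, mul_nonneg (aF_pos (q := q) (ep := ep) hem u).le (hv0 ▸ hvu)]
  · have hu : 0 < u := hv0.trans_le hvu
    have hx : 0 < v/u := div_pos hv0 hu
    have hx1 : v/u ≤ 1 := (div_le_one hu).2 hvu
    -- AM-GM : (v/u)^(q-1) ≤ (q-1)*(v/u) + (2-q)
    have hgm : (v/u) ^ (q-1) ≤ (q-1) * (v/u) + (2-q) := by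
      have := Real.geom_mean_le_arith_mean2_weighted (w₁ := q-1) (w₂ := 2-q)
        (p₁ := v/u) (p₂ := 1) (by linarith) (by linarith) hx.le zero_le_one (by ring)
      simpa using this
    have hkey : aF q em ep v * v ≤ aF q em ep u * ((2-q)*u + (q-1)*v) := by
      have h1 : aF q em ep v * v ≤ ((v/u)^(q-2) * aF q em ep u) * v :=
        mul_le_mul_of_nonneg_right (aF_scale hq2 hem hee hv0 hvu) hv
      have h2 : (v/u)^(q-2) * v = (v/u)^(q-1) * u := by
        have : (v/u)^(q-1) = (v/u)^(q-2) * (v/u) := by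
          rw [← Real.rpow_add_one hx.ne' (q-2)]; ring_nf
        rw [this]; field_simp
      have h3 : (v/u)^(q-1) * u ≤ ((q-1)*(v/u) + (2-q)) * u :=
        mul_le_mul_of_nonneg_right hgm hu.le
      have h4 : ((q-1)*(v/u) + (2-q)) * u = (q-1)*v + (2-q)*u := by field_simp
      have h5 : aF q em ep v * v ≤ (v/u)^(q-1) * u * aF q em ep u := by
        calc aF q em ep v * v ≤ ((v/u)^(q-2) * aF q em ep u) * v := h1
          _ = (v/u)^(q-2) * v * aF q em ep u := by ring
          _ = (v/u)^(q-1) * u * aF q em ep u := by rw [h2]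
      calc aF q em ep v * v ≤ (v/u)^(q-1) * u * aF q em ep u := h5
        _ ≤ ((q-1)*(v/u) + (2-q)) * u * aF q em ep u :=
            mul_le_mul_of_nonneg_right (mul_le_mul_of_nonneg_right hgm hu.le)
              (aF_pos hem u).le
        _ = aF q em ep u * ((2-q)*u + (q-1)*v) := by rw [h4]; ring
    have := hkey
    rw [psiF, psiF]
    nlinarith [aF_pos (q := q) (ep := ep) hem u]

/-- S6 upper bound for ψ. -/
lemma psi_upper (hq2 : q < 2) (hem : 0 < em) {v u : ℝ} (hv : 0 ≤ v) (hvu : v ≤ u) :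
    psiF q em ep u - psiF q em ep v ≤ aF q em ep v * (u - v) := by
  have h1 : aF q em ep u * u ≤ aF q em ep v * u :=
    mul_le_mul_of_nonneg_right (aF_anti hq2 hem hvu) (hv.trans hvu)
  rw [psiF, psiF]; nlinarith

/-- S6 lower bound for χ. -/
lemma chi_lower (hq1 : 1 < q) (hq2 : q < 2) (hem : 0 < em) (hee : em ≤ ep)
    {v u : ℝ} (hv : 0 ≤ v) (hvu : v ≤ u) :
    (q/2) * bF q em ep u * (u - v) ≤ chiF q em ep u - chiF q em ep v := by
  rcases eq_or_lt_of_le hv with hv0 | hv0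
  · rw [← hv0, chiF, chiF, mul_zero]
    nlinarith [bF_pos (q := q) (ep := ep) hem u, mul_nonneg (bF_pos (q := q) (ep := ep) hem u).le (hv0 ▸ hvu)]
  · have hu : 0 < u := hv0.trans_le hvu
    have hx : 0 < v/u := div_pos hv0 hu
    have hgm : (v/u) ^ (q/2) ≤ (q/2) * (v/u) + (1-q/2) := by
      have := Real.geom_mean_le_arith_mean2_weighted (w₁ := q/2) (w₂ := 1-q/2)
        (p₁ := v/u) (p₂ := 1) (by linarith) (by linarith) hx.le zero_le_one (by ring)
      simpa using this
    have hkey : bF q em ep v * v ≤ bF q em ep u * ((1-q/2)*u + (q/2)*v) := by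
      have h2 : (v/u)^((q-2)/2) * v = (v/u)^(q/2) * u := by
        have : (v/u)^(q/2) = (v/u)^((q-2)/2) * (v/u) := by
          rw [← Real.rpow_add_one hx.ne' ((q-2)/2)]; ring_nf
        rw [this]; field_simp
      have h5 : bF q em ep v * v ≤ (v/u)^(q/2) * u * bF q em ep u := by
        calc bF q em ep v * v ≤ ((v/u)^((q-2)/2) * bF q em ep u) * v :=
              mul_le_mul_of_nonneg_right (bF_scale hq2 hem hee hv0 hvu) hv
          _ = (v/u)^((q-2)/2) * v * bF q em ep u := by ring
          _ = (v/u)^(q/2) * u * bF q em ep u := by rw [h2]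
      calc bF q em ep v * v ≤ (v/u)^(q/2) * u * bF q em ep u := h5
        _ ≤ ((q/2)*(v/u) + (1-q/2)) * u * bF q em ep u :=
            mul_le_mul_of_nonneg_right (mul_le_mul_of_nonneg_right hgm hu.le)
              (bF_pos hem u).le
        _ = bF q em ep u * ((1-q/2)*u + (q/2)*v) := by field_simp; ring
    rw [chiF, chiF]
    nlinarith [bF_pos (q := q) (ep := ep) hem u]

/-- S6 upper bound for χ. -/
lemma chi_upper (hq2 : q < 2) (hem : 0 < em) {v u : ℝ} (hv : 0 ≤ v) (hvu : v ≤ u) :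
    chiF q em ep u - chiF q em ep v ≤ bF q em ep v * (u - v) := by
  have h1 : bF q em ep u * u ≤ bF q em ep v * u :=
    mul_le_mul_of_nonneg_right (bF_anti hq2 hem hvu) (hv.trans hvu)
  rw [chiF, chiF]; nlinarith

lemma psi_mono (hq1 : 1 < q) (hq2 : q < 2) (hem : 0 < em) (hee : em ≤ ep)
    {v u : ℝ} (hv : 0 ≤ v) (hvu : v ≤ u) : psiF q em ep v ≤ psiF q em ep u := by
  have h := psi_lower hq1 hq2 hem hee hv hvu
  have h0 : 0 ≤ (q-1) * aF q em ep u * (u - v) :=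
    mul_nonneg (mul_nonneg (by linarith) (aF_pos hem u).le) (by linarith)
  linarith

lemma chi_mono (hq1 : 1 < q) (hq2 : q < 2) (hem : 0 < em) (hee : em ≤ ep)
    {v u : ℝ} (hv : 0 ≤ v) (hvu : v ≤ u) : chiF q em ep v ≤ chiF q em ep u := by
  have h := chi_lower hq1 hq2 hem hee hv hvu
  have h0 : 0 ≤ (q/2) * bF q em ep u * (u - v) :=
    mul_nonneg (mul_nonneg (by linarith) (bF_pos hem u).le) (by linarith)
  linarith

end Stmt9Aux


namespace Stmt9Aux

variable {q em ep : ℝ}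

lemma kappa_of_le {y : ℝ} (hy : y ≤ em) :
    kappaStar q em ep y = (1/2) * em ^ (q-2) * y^2 + (1/q - 1/2) * em ^ q := by
  simp only [kappaStar]; rw [if_pos hy]

lemma kappa_of_mid {y : ℝ} (hy1 : ¬ y ≤ em) (hy2 : y ≤ ep) :
    kappaStar q em ep y = (1/q) * y ^ q := by
  simp only [kappaStar]; rw [if_neg hy1, if_pos hy2]

lemma kappa_of_gt {y : ℝ} (hy1 : ¬ y ≤ em) (hy2 : ¬ y ≤ ep) :
    kappaStar q em ep y = (1/2) * ep ^ (q-2) * y^2 + (1/q - 1/2) * ep ^ q := by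
  simp only [kappaStar]; rw [if_neg hy1, if_neg hy2]

lemma branch_eq {x : ℝ} (hx : 0 < x) :
    (1/2) * x ^ (q-2) * x^2 + (1/q - 1/2) * x ^ q = (1/q) * x ^ q := by
  have h : x^(q-2) * x^2 = x^q := by
    rw [← Real.rpow_natCast x 2, ← Real.rpow_add hx]; norm_num
  linear_combination (1/2) * h

lemma kappa_at_em (hem : 0 < em) : kappaStar q em ep em = (1/q) * em ^ q := by
  rw [kappa_of_le le_rfl, branch_eq hem]

lemma kappa_at_ep (hem : 0 < em) (hee : em ≤ ep) :
    kappaStar q em ep ep = (1/q) * ep ^ q := by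
  rcases eq_or_lt_of_le hee with heq | hlt
  · rw [← heq]; exact kappa_at_em hem
  · exact kappa_of_mid (not_le.2 hlt) le_rfl

lemma psi_cont (hem : 0 < em) : Continuous (psiF q em ep) := by
  have hg : Continuous fun t : ℝ => max em (min t ep) :=
    continuous_const.max (continuous_id.min continuous_const)
  have : Continuous fun t : ℝ => (max em (min t ep)) ^ (q-2) :=
    hg.rpow_const fun t => Or.inl (ne_of_gt (lt_of_lt_of_le hem (le_max_left _ _)))
  exact this.mul continuous_id

private lemma hb1 (c₁ c₂ x : ℝ) :
    HasDerivAt (fun t : ℝ => (1/2) * c₁ * t^2 + c₂) (c₁ * x) x := by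
  have h := ((hasDerivAt_pow 2 x).const_mul ((1/2) * c₁)).add_const c₂
  refine h.congr_deriv ?_
  push_cast; ring

private lemma hb2 (hq : q ≠ 0) {x : ℝ} (hx : 0 < x) :
    HasDerivAt (fun t : ℝ => (1/q) * t ^ q) (x ^ (q-2) * x) x := by
  have h := (Real.hasDerivAt_rpow_const (x := x) (p := q) (Or.inl hx.ne')).const_mul (1/q)
  refine h.congr_deriv ?_
  rw [← Real.rpow_add_one hx.ne' (q-2)]
  have h2 : q - 2 + 1 = q - 1 := by ring
  rw [h2]; field_simp

lemma hasDerivAt_kappa (hq1 : 1 < q) (hem : 0 < em) (hee : em ≤ ep) (t : ℝ) :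
    HasDerivAt (kappaStar q em ep) (psiF q em ep t) t := by
  have hq0 : q ≠ 0 := by positivity
  rcases eq_or_lt_of_le hee with heq | hlt
  · -- em = ep : kappaStar is globally the quadratic branch
    subst heq
    have hgc : gc em em t = em := by
      rw [gc]
      rcases le_total t em with h | h
      · rw [min_eq_left h, max_eq_left h]
      · rw [min_eq_right h, max_self]
    have hval : psiF q em em t = em ^ (q-2) * t := by rw [psiF, aF, hgc]
    rw [hval]
    refine (hb1 (em ^ (q-2)) ((1/q - 1/2) * em ^ q) t).congr_of_eventuallyEq ?_
    filter_upwards with y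
    rcases le_or_gt y em with h | h
    · exact kappa_of_le h
    · exact kappa_of_gt (not_le.2 h) (not_le.2 h)
  · rcases lt_trichotomy t em with h | h | h
    · have hgc : gc em ep t = em := by
        rw [gc, min_eq_left (h.le.trans hee), max_eq_left h.le]
      have hval : psiF q em ep t = em ^ (q-2) * t := by rw [psiF, aF, hgc]
      rw [hval]
      refine (hb1 (em ^ (q-2)) ((1/q - 1/2) * em ^ q) t).congr_of_eventuallyEq ?_
      filter_upwards [Iio_mem_nhds h] with y hy
      exact kappa_of_le hy.le
    · rw [h]
      have hgc : gc em ep em = em := by rw [gc, min_eq_left hee, max_self]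
      have hval : psiF q em ep em = em ^ (q-2) * em := by rw [psiF, aF, hgc]
      rw [hval]
      have hleft : HasDerivWithinAt (kappaStar q em ep) (em ^ (q-2) * em) (Set.Iic em) em := by
        refine ((hb1 (em ^ (q-2)) ((1/q - 1/2) * em ^ q) em).hasDerivWithinAt).congr
          (fun y hy => kappa_of_le hy) (kappa_of_le le_rfl)
      have hright : HasDerivWithinAt (kappaStar q em ep) (em ^ (q-2) * em) (Set.Ici em) em := by
        refine ((hb2 hq0 hem).hasDerivWithinAt).congr_of_eventuallyEq ?_ (kappa_at_em hem)
        have hmem : Set.Iio ep ∈ nhdsWithin em (Set.Ici em) :=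
          nhdsWithin_le_nhds (Iio_mem_nhds hlt)
        filter_upwards [hmem, self_mem_nhdsWithin] with y hy1 hy2
        rcases le_or_gt y em with h' | h'
        · have : y = em := le_antisymm h' hy2
          rw [this]; exact kappa_at_em hem
        · exact kappa_of_mid (not_le.2 h') (le_of_lt hy1)
      have := hleft.union hright
      rw [Set.Iic_union_Ici] at this
      exact this.hasDerivAt (by simp)
    · rcases lt_trichotomy t ep with h2 | h2 | h2
      · have hgc : gc em ep t = t := by rw [gc, min_eq_left h2.le, max_eq_right h.le]
        have hval : psiF q em ep t = t ^ (q-2) * t := by rw [psiF, aF, hgc]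
        rw [hval]
        refine (hb2 hq0 (hem.trans h)).congr_of_eventuallyEq ?_
        filter_upwards [Ioo_mem_nhds h h2] with y hy
        exact kappa_of_mid (not_le.2 hy.1) hy.2.le
      · rw [h2]
        have hp : 0 < ep := hem.trans_le hee
        have hgc : gc em ep ep = ep := by rw [gc, min_self, max_eq_right hee]
        have hval : psiF q em ep ep = ep ^ (q-2) * ep := by rw [psiF, aF, hgc]
        rw [hval]
        have hleft : HasDerivWithinAt (kappaStar q em ep) (ep ^ (q-2) * ep) (Set.Iic ep) ep := by
          refine ((hb2 hq0 hp).hasDerivWithinAt).congr_of_eventuallyEq ?_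
            (kappa_at_ep hem hee)
          have hmem : Set.Ioi em ∈ nhdsWithin ep (Set.Iic ep) :=
            nhdsWithin_le_nhds (Ioi_mem_nhds hlt)
          filter_upwards [hmem, self_mem_nhdsWithin] with y hy1 hy2
          exact kappa_of_mid (not_le.2 hy1) hy2
        have hright : HasDerivWithinAt (kappaStar q em ep) (ep ^ (q-2) * ep) (Set.Ici ep) ep := by
          refine ((hb1 (ep ^ (q-2)) ((1/q - 1/2) * ep ^ q) ep).hasDerivWithinAt).congr
            (fun y hy => ?_) ?_
          · rcases eq_or_lt_of_le (Set.mem_Ici.1 hy) with h' | h'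
            · rw [← h', kappa_at_ep hem hee, branch_eq hp]
            · exact kappa_of_gt (not_le.2 (hlt.trans h')) (not_le.2 h')
          · rw [kappa_at_ep hem hee, branch_eq hp]
        have := hleft.union hright
        rw [Set.Iic_union_Ici] at this
        exact this.hasDerivAt (by simp)
      · have hgc : gc em ep t = ep := by rw [gc, min_eq_right h2.le, max_eq_right hee]
        have hval : psiF q em ep t = ep ^ (q-2) * t := by rw [psiF, aF, hgc]
        rw [hval]
        refine (hb1 (ep ^ (q-2)) ((1/q - 1/2) * ep ^ q) t).congr_of_eventuallyEq ?_
        filter_upwards [Ioi_mem_nhds h2] with y hy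
        exact kappa_of_gt (not_le.2 (hee.trans_lt hy)) (not_le.2 hy)

lemma kappa_sub (hq1 : 1 < q) (hem : 0 < em) (hee : em ≤ ep) (v u : ℝ) :
    kappaStar q em ep u - kappaStar q em ep v = ∫ s in v..u, psiF q em ep s :=
  (intervalIntegral.integral_eq_sub_of_hasDerivAt
    (fun s _ => hasDerivAt_kappa hq1 hem hee s)
    ((psi_cont hem).intervalIntegrable v u)).symm

end Stmt9Aux


namespace Stmt9Aux

variable {q em ep : ℝ}

lemma kappa_convex (hq1 : 1 < q) (hq2 : q < 2) (hem : 0 < em) (hee : em ≤ ep)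
    {u v : ℝ} (hu : 0 ≤ u) (hv : 0 ≤ v) :
    kappaStar q em ep u - kappaStar q em ep v ≤ psiF q em ep u * (u - v) := by
  rcases le_total v u with hvu | huv
  · rw [kappa_sub hq1 hem hee v u]
    have h := intervalIntegral.integral_mono_on hvu
      ((psi_cont hem).intervalIntegrable (μ := volume) v u) (continuous_const.intervalIntegrable (μ := volume) _ _)
      (fun s hs => psi_mono hq1 hq2 hem hee (hv.trans hs.1) hs.2)
    simpa [smul_eq_mul, mul_comm] using h
  · rw [kappa_sub hq1 hem hee v u, intervalIntegral.integral_symm u v]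
    have h := intervalIntegral.integral_mono_on huv (continuous_const.intervalIntegrable (μ := volume) _ _)
      ((psi_cont hem).intervalIntegrable (μ := volume) u v)
      (fun s hs => psi_mono hq1 hq2 hem hee hu hs.1)
    have h' : psiF q em ep u * (v - u) ≤ ∫ s in u..v, psiF q em ep s := by
      simpa [smul_eq_mul, mul_comm] using h
    linarith

lemma integral_sub_const (v u : ℝ) : ∫ s in v..u, (s - v) = (u - v)^2 / 2 := by
  rw [intervalIntegral.integral_sub (continuous_id'.intervalIntegrable (μ := volume) _ _)
    (continuous_const.intervalIntegrable (μ := volume) _ _), integral_id,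
    intervalIntegral.integral_const, smul_eq_mul]
  ring

lemma kappa_strong (hq1 : 1 < q) (hq2 : q < 2) (hem : 0 < em) (hee : em ≤ ep)
    {u v : ℝ} (hu : 0 ≤ u) (hv : 0 ≤ v) :
    (q-1)/2 * aF q em ep (u+v) * (u-v)^2
      ≤ kappaStar q em ep u - kappaStar q em ep v - psiF q em ep v * (u - v) := by
  rcases le_total v u with hvu | huv
  · rw [kappa_sub hq1 hem hee v u]
    have key : ∀ s ∈ Set.Icc v u,
        psiF q em ep v + (q-1) * aF q em ep (u+v) * (s-v) ≤ psiF q em ep s := by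
      intro s hs
      have h1 := psi_lower hq1 hq2 hem hee hv hs.1
      have h2 : aF q em ep (u+v) ≤ aF q em ep s := aF_anti hq2 hem (by linarith [hs.2])
      have h3 : (q-1) * aF q em ep (u+v) * (s-v) ≤ (q-1) * aF q em ep s * (s-v) :=
        mul_le_mul_of_nonneg_right (mul_le_mul_of_nonneg_left h2 (by linarith))
          (by linarith [hs.1])
      linarith
    have hlin : IntervalIntegrable
        (fun s => psiF q em ep v + (q-1) * aF q em ep (u+v) * (s-v)) volume v u :=
      (continuous_const.add (continuous_const.mul
        (continuous_id'.sub continuous_const))).intervalIntegrable v u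
    have hle := intervalIntegral.integral_mono_on hvu hlin
      ((psi_cont hem).intervalIntegrable (μ := volume) v u) key
    have hcalc : ∫ s in v..u, (psiF q em ep v + (q-1) * aF q em ep (u+v) * (s-v))
        = psiF q em ep v * (u-v) + (q-1) * aF q em ep (u+v) * ((u-v)^2/2) := by
      rw [intervalIntegral.integral_add (continuous_const.intervalIntegrable (μ := volume) _ _)
        (show IntervalIntegrable (fun s : ℝ => (q-1) * aF q em ep (u+v) * (s-v)) volume v u from (continuous_const.mul (continuous_id'.sub continuous_const)).intervalIntegrable (μ := volume) v u),
        intervalIntegral.integral_const, intervalIntegral.integral_const_mul,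
        integral_sub_const, smul_eq_mul]
      ring
    rw [hcalc] at hle
    linarith
  · rw [kappa_sub hq1 hem hee v u, intervalIntegral.integral_symm u v]
    have key : ∀ s ∈ Set.Icc u v,
        psiF q em ep s ≤ psiF q em ep v - (q-1) * aF q em ep (u+v) * (v-s) := by
      intro s hs
      have h1 := psi_lower hq1 hq2 hem hee (hu.trans hs.1) hs.2
      have h2 : aF q em ep (u+v) ≤ aF q em ep v := aF_anti hq2 hem (by linarith)
      have h3 : (q-1) * aF q em ep (u+v) * (v-s) ≤ (q-1) * aF q em ep v * (v-s) :=
        mul_le_mul_of_nonneg_right (mul_le_mul_of_nonneg_left h2 (by linarith))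
          (by linarith [hs.2])
      linarith
    have hlin : IntervalIntegrable
        (fun s => psiF q em ep v - (q-1) * aF q em ep (u+v) * (v-s)) volume u v :=
      (continuous_const.sub (continuous_const.mul
        (continuous_const.sub continuous_id'))).intervalIntegrable u v
    have hle := intervalIntegral.integral_mono_on huv
      ((psi_cont hem).intervalIntegrable (μ := volume) u v) hlin key
    have hsub : ∫ s in u..v, (v - s) = (v - u)^2 / 2 := by
      rw [intervalIntegral.integral_sub (continuous_const.intervalIntegrable (μ := volume) _ _)
        (continuous_id'.intervalIntegrable (μ := volume) _ _), integral_id,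
        intervalIntegral.integral_const, smul_eq_mul]
      ring
    have hcalc : ∫ s in u..v, (psiF q em ep v - (q-1) * aF q em ep (u+v) * (v-s))
        = psiF q em ep v * (v-u) - (q-1) * aF q em ep (u+v) * ((v-u)^2/2) := by
      rw [intervalIntegral.integral_sub (continuous_const.intervalIntegrable (μ := volume) _ _)
        (show IntervalIntegrable (fun s : ℝ => (q-1) * aF q em ep (u+v) * (v-s)) volume u v from (continuous_const.mul (continuous_const.sub continuous_id')).intervalIntegrable (μ := volume) u v),
        intervalIntegral.integral_const, intervalIntegral.integral_const_mul,
        hsub, smul_eq_mul]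
      ring
    rw [hcalc] at hle
    have hsq : (u - v)^2 = (v - u)^2 := by ring
    rw [hsq]
    linarith

end Stmt9Aux


namespace Stmt9Aux

variable {q em ep : ℝ} {d : ℕ}

lemma Astar_eq (P : EuclideanSpace ℝ (Fin d)) :
    Astar q em ep P = aF q em ep ‖P‖ • P := rfl

lemma Vstar_eq (P : EuclideanSpace ℝ (Fin d)) :
    Vstar q em ep P = bF q em ep ‖P‖ • P := rfl

lemma expand_A (P Q : EuclideanSpace ℝ (Fin d)) :
    ⟪Astar q em ep P - Astar q em ep Q, P - Q⟫
      = (psiF q em ep ‖P‖ - psiF q em ep ‖Q‖) * (‖P‖ - ‖Q‖)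
        + (aF q em ep ‖P‖ + aF q em ep ‖Q‖) * (‖P‖ * ‖Q‖ - ⟪P, Q⟫) := by
  simp only [Astar_eq, inner_sub_left, inner_sub_right, real_inner_smul_left]
  rw [real_inner_self_eq_norm_sq, real_inner_self_eq_norm_sq, real_inner_comm Q P, psiF, psiF]
  ring

lemma expand_A' (P Q : EuclideanSpace ℝ (Fin d)) :
    ⟪Astar q em ep P - Astar q em ep Q, P - Q⟫
      = aF q em ep ‖P‖ * (‖P‖^2 - ⟪P, Q⟫) + aF q em ep ‖Q‖ * (‖Q‖^2 - ⟪P, Q⟫) := by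
  simp only [Astar_eq, inner_sub_left, inner_sub_right, real_inner_smul_left]
  rw [real_inner_self_eq_norm_sq, real_inner_self_eq_norm_sq, real_inner_comm Q P]
  ring

lemma expand_A_single (P Q : EuclideanSpace ℝ (Fin d)) :
    ⟪Astar q em ep P, P - Q⟫
      = psiF q em ep ‖P‖ * (‖P‖ - ‖Q‖) + aF q em ep ‖P‖ * (‖P‖ * ‖Q‖ - ⟪P, Q⟫) := by
  simp only [Astar_eq, inner_sub_right, real_inner_smul_left]
  rw [real_inner_self_eq_norm_sq, psiF]
  ring

lemma expand_A_single' (P Q : EuclideanSpace ℝ (Fin d)) :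
    ⟪Astar q em ep Q, P - Q⟫
      = psiF q em ep ‖Q‖ * (‖P‖ - ‖Q‖) - aF q em ep ‖Q‖ * (‖P‖ * ‖Q‖ - ⟪P, Q⟫) := by
  simp only [Astar_eq, inner_sub_right, real_inner_smul_left]
  rw [real_inner_self_eq_norm_sq, real_inner_comm Q P, psiF]
  ring

lemma expand_V (hem : 0 < em) (P Q : EuclideanSpace ℝ (Fin d)) :
    ‖Vstar q em ep P - Vstar q em ep Q‖^2
      = (chiF q em ep ‖P‖ - chiF q em ep ‖Q‖)^2
        + 2 * (bF q em ep ‖P‖ * bF q em ep ‖Q‖) * (‖P‖ * ‖Q‖ - ⟪P, Q⟫) := by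
  rw [norm_sub_sq_real]
  simp only [Vstar_eq, real_inner_smul_left, real_inner_smul_right, norm_smul,
    Real.norm_eq_abs, abs_of_pos (bF_pos hem _)]
  simp only [chiF]
  ring

lemma expand_normsq (P Q : EuclideanSpace ℝ (Fin d)) :
    ‖P - Q‖^2 = (‖P‖ - ‖Q‖)^2 + 2 * (‖P‖ * ‖Q‖ - ⟪P, Q⟫) := by
  rw [norm_sub_sq_real]; ring

lemma cs_nonneg (P Q : EuclideanSpace ℝ (Fin d)) : 0 ≤ ‖P‖ * ‖Q‖ - ⟪P, Q⟫ :=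
  sub_nonneg.2 (real_inner_le_norm P Q)

lemma cs_abs (P Q : EuclideanSpace ℝ (Fin d)) : -(‖P‖ * ‖Q‖) ≤ ⟪P, Q⟫ :=
  neg_le_of_abs_le (abs_real_inner_le_norm P Q)

/-- Pointwise inequality 1 (convexity). -/
lemma pw1 (hq1 : 1 < q) (hq2 : q < 2) (hem : 0 < em) (hee : em ≤ ep)
    (P Q : EuclideanSpace ℝ (Fin d)) :
    kappaStar q em ep ‖P‖ - kappaStar q em ep ‖Q‖ ≤ ⟪Astar q em ep P, P - Q⟫ := by
  have h := kappa_convex hq1 hq2 hem hee (norm_nonneg P) (norm_nonneg Q)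
  rw [expand_A_single]
  have h2 : 0 ≤ aF q em ep ‖P‖ * (‖P‖ * ‖Q‖ - ⟪P, Q⟫) :=
    mul_nonneg (aF_pos hem _).le (cs_nonneg P Q)
  linarith

/-- Pointwise inequality 3 (strong convexity). -/
lemma pw3 (hq1 : 1 < q) (hq2 : q < 2) (hem : 0 < em) (hee : em ≤ ep)
    (P Q : EuclideanSpace ℝ (Fin d)) :
    (q-1)/2 * (aF q em ep (‖P‖ + ‖Q‖) * ‖P - Q‖^2)
      ≤ kappaStar q em ep ‖P‖ - kappaStar q em ep ‖Q‖ - ⟪Astar q em ep Q, P - Q⟫ := by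
  set u := ‖P‖; set v := ‖Q‖
  have hstrong := kappa_strong hq1 hq2 hem hee (norm_nonneg P) (norm_nonneg Q)
  have hcs := cs_nonneg P Q
  have haf : aF q em ep (u+v) ≤ aF q em ep v :=
    aF_anti hq2 hem (le_add_of_nonneg_left (norm_nonneg P))
  have e1 : aF q em ep (u+v) * (u*v - ⟪P,Q⟫) ≤ aF q em ep v * (u*v - ⟪P,Q⟫) :=
    mul_le_mul_of_nonneg_right haf hcs
  have e2 : (q-1) * (aF q em ep (u+v) * (u*v - ⟪P,Q⟫)) ≤ aF q em ep (u+v) * (u*v - ⟪P,Q⟫) := by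
    have h0 : 0 ≤ aF q em ep (u+v) * (u*v - ⟪P,Q⟫) := mul_nonneg (aF_pos hem _).le hcs
    nlinarith
  rw [expand_A_single', expand_normsq]
  linarith

end Stmt9Aux


namespace Stmt9Aux

variable {q em ep : ℝ} {d : ℕ}

lemma aF_five (hq1 : 1 < q) (hq2 : q < 2) (hem : 0 < em) (hee : em ≤ ep) {u v : ℝ}
    (hu : 0 ≤ u) (hT : 0 < u + v) (h4 : u ≤ 4*v) :
    aF q em ep v ≤ 5 * aF q em ep (u+v) := by
  have hv0 : 0 < v := by linarith
  have h1 : aF q em ep v ≤ aF q em ep ((u+v)/5) := aF_anti hq2 hem (by linarith)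
  have h2 := aF_scale hq2 hem hee (show 0 < (u+v)/5 by linarith)
    (show (u+v)/5 ≤ u+v by linarith)
  have h3 : (u+v)/5/(u+v) = 1/5 := by field_simp
  rw [h3] at h2
  have h5 : ((1:ℝ)/5)^(q-2) ≤ 5 := by
    have e : ((1:ℝ)/5)^(q-2) = (5:ℝ)^(2-q) := by
      rw [one_div, Real.inv_rpow (by norm_num : (0:ℝ) ≤ 5), ← Real.rpow_neg (by norm_num)]
      congr 1; ring
    rw [e]
    calc (5:ℝ)^(2-q) ≤ (5:ℝ)^(1:ℝ) :=
          Real.rpow_le_rpow_of_exponent_le (by norm_num) (by linarith)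
      _ = 5 := Real.rpow_one 5
  have h6 : ((1:ℝ)/5)^(q-2) * aF q em ep (u+v) ≤ 5 * aF q em ep (u+v) :=
    mul_le_mul_of_nonneg_right h5 (aF_pos hem _).le
  linarith

/-- upper bound on the A-form, asymmetric version. -/
lemma pwup_aux (hq1 : 1 < q) (hq2 : q < 2) (hem : 0 < em) (hee : em ≤ ep)
    (P Q : EuclideanSpace ℝ (Fin d)) (hvu : ‖Q‖ ≤ ‖P‖) :
    ⟪Astar q em ep P - Astar q em ep Q, P - Q⟫
      ≤ 6 * (aF q em ep (‖P‖+‖Q‖) * ‖P-Q‖^2) := by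
  have hu : (0:ℝ) ≤ ‖P‖ := norm_nonneg P
  have hv : (0:ℝ) ≤ ‖Q‖ := norm_nonneg Q
  rcases eq_or_lt_of_le (by linarith : (0:ℝ) ≤ ‖P‖ + ‖Q‖) with hT | hT
  · have hP : P = 0 := norm_eq_zero.1 (by linarith)
    have hQ : Q = 0 := norm_eq_zero.1 (by linarith)
    simp [hP, hQ]
  · have hcs := cs_nonneg P Q
    have haT : 0 < aF q em ep (‖P‖+‖Q‖) := aF_pos hem _
    rcases le_total ‖P‖ (4*‖Q‖) with h4 | h4
    · have hav := aF_five hq1 hq2 hem hee hu hT h4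
      have d1 : (psiF q em ep ‖P‖ - psiF q em ep ‖Q‖)*(‖P‖-‖Q‖)
          ≤ aF q em ep ‖Q‖ * (‖P‖-‖Q‖)^2 := by
        have h := psi_upper (ep := ep) hq2 hem hv hvu
        calc (psiF q em ep ‖P‖ - psiF q em ep ‖Q‖)*(‖P‖-‖Q‖)
            ≤ (aF q em ep ‖Q‖*(‖P‖-‖Q‖))*(‖P‖-‖Q‖) :=
              mul_le_mul_of_nonneg_right h (by linarith)
          _ = aF q em ep ‖Q‖*(‖P‖-‖Q‖)^2 := by ring
      have d2 : (aF q em ep ‖P‖ + aF q em ep ‖Q‖)*(‖P‖*‖Q‖ - ⟪P,Q⟫)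
          ≤ (2*aF q em ep ‖Q‖)*(‖P‖*‖Q‖ - ⟪P,Q⟫) :=
        mul_le_mul_of_nonneg_right (by linarith [aF_anti (ep := ep) hq2 hem hvu]) hcs
      have m1 : aF q em ep ‖Q‖*(‖P‖-‖Q‖)^2 ≤ (5*aF q em ep (‖P‖+‖Q‖))*(‖P‖-‖Q‖)^2 :=
        mul_le_mul_of_nonneg_right hav (sq_nonneg _)
      have m2 : (2*aF q em ep ‖Q‖)*(‖P‖*‖Q‖ - ⟪P,Q⟫)
          ≤ (10*aF q em ep (‖P‖+‖Q‖))*(‖P‖*‖Q‖ - ⟪P,Q⟫) :=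
        mul_le_mul_of_nonneg_right (by linarith) hcs
      have p1 : 0 ≤ aF q em ep (‖P‖+‖Q‖)*(‖P‖-‖Q‖)^2 := mul_nonneg haT.le (sq_nonneg _)
      have p2 : 0 ≤ aF q em ep (‖P‖+‖Q‖)*(‖P‖*‖Q‖ - ⟪P,Q⟫) := mul_nonneg haT.le hcs
      rw [expand_A, expand_normsq]
      nlinarith [d1, d2, m1, m2, p1, p2]
    · have hd : ‖P‖ - ‖Q‖ ≤ ‖P - Q‖ := norm_sub_norm_le P Q
      have hdelta : (3/5*(‖P‖+‖Q‖))^2 ≤ ‖P-Q‖^2 := by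
        have h35 : 3/5*(‖P‖+‖Q‖) ≤ ‖P-Q‖ := by linarith
        exact pow_le_pow_left₀ (by linarith) h35 2
      have hpsiu : aF q em ep ‖P‖ * ‖P‖ ≤ aF q em ep (‖P‖+‖Q‖) * (‖P‖+‖Q‖) := by
        have := psi_mono hq1 hq2 hem hee hu (by linarith : ‖P‖ ≤ ‖P‖+‖Q‖)
        simpa [psiF] using this
      have hpsiv : aF q em ep ‖Q‖ * ‖Q‖ ≤ aF q em ep (‖P‖+‖Q‖) * (‖P‖+‖Q‖) := by
        have := psi_mono hq1 hq2 hem hee hv (by linarith : ‖Q‖ ≤ ‖P‖+‖Q‖)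
        simpa [psiF] using this
      have b1 : aF q em ep ‖P‖ * (‖P‖^2 - ⟪P,Q⟫) ≤ aF q em ep (‖P‖+‖Q‖) * (‖P‖+‖Q‖)^2 := by
        have s1 : ‖P‖^2 - ⟪P,Q⟫ ≤ ‖P‖*(‖P‖+‖Q‖) := by nlinarith [cs_abs P Q]
        calc aF q em ep ‖P‖ * (‖P‖^2 - ⟪P,Q⟫)
            ≤ aF q em ep ‖P‖ * (‖P‖*(‖P‖+‖Q‖)) :=
              mul_le_mul_of_nonneg_left s1 (aF_pos hem _).le
          _ = (aF q em ep ‖P‖ * ‖P‖)*(‖P‖+‖Q‖) := by ring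
          _ ≤ (aF q em ep (‖P‖+‖Q‖) * (‖P‖+‖Q‖))*(‖P‖+‖Q‖) :=
              mul_le_mul_of_nonneg_right hpsiu (by linarith)
          _ = aF q em ep (‖P‖+‖Q‖) * (‖P‖+‖Q‖)^2 := by ring
      have b2 : aF q em ep ‖Q‖ * (‖Q‖^2 - ⟪P,Q⟫) ≤ aF q em ep (‖P‖+‖Q‖) * (‖P‖+‖Q‖)^2 := by
        have s1 : ‖Q‖^2 - ⟪P,Q⟫ ≤ ‖Q‖*(‖P‖+‖Q‖) := by nlinarith [cs_abs P Q]
        calc aF q em ep ‖Q‖ * (‖Q‖^2 - ⟪P,Q⟫)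
            ≤ aF q em ep ‖Q‖ * (‖Q‖*(‖P‖+‖Q‖)) :=
              mul_le_mul_of_nonneg_left s1 (aF_pos hem _).le
          _ = (aF q em ep ‖Q‖ * ‖Q‖)*(‖P‖+‖Q‖) := by ring
          _ ≤ (aF q em ep (‖P‖+‖Q‖) * (‖P‖+‖Q‖))*(‖P‖+‖Q‖) :=
              mul_le_mul_of_nonneg_right hpsiv (by linarith)
          _ = aF q em ep (‖P‖+‖Q‖) * (‖P‖+‖Q‖)^2 := by ring
      have mm : aF q em ep (‖P‖+‖Q‖) * (‖P‖+‖Q‖)^2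
          ≤ 25/9*(aF q em ep (‖P‖+‖Q‖)*‖P-Q‖^2) := by nlinarith [haT.le, hdelta]
      have p3 : 0 ≤ aF q em ep (‖P‖+‖Q‖)*‖P-Q‖^2 := mul_nonneg haT.le (sq_nonneg _)
      rw [expand_A']
      linarith

/-- lower bound of V-distance against the natural quantity, asymmetric version. -/
lemma pwlowV_aux (hq1 : 1 < q) (hq2 : q < 2) (hem : 0 < em) (hee : em ≤ ep)
    (P Q : EuclideanSpace ℝ (Fin d)) (hvu : ‖Q‖ ≤ ‖P‖) :
    (1/4) * (aF q em ep (‖P‖+‖Q‖) * ‖P-Q‖^2) ≤ ‖Vstar q em ep P - Vstar q em ep Q‖^2 := by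
  have hu : (0:ℝ) ≤ ‖P‖ := norm_nonneg P
  have hv : (0:ℝ) ≤ ‖Q‖ := norm_nonneg Q
  have hcs := cs_nonneg P Q
  have hbu : bF q em ep (‖P‖+‖Q‖) ≤ bF q em ep ‖P‖ := bF_anti hq2 hem (by linarith)
  have hbv : bF q em ep (‖P‖+‖Q‖) ≤ bF q em ep ‖Q‖ := bF_anti hq2 hem (by linarith)
  have hbT : 0 < bF q em ep (‖P‖+‖Q‖) := bF_pos hem _
  have w1 : aF q em ep (‖P‖+‖Q‖) ≤ bF q em ep ‖P‖ * bF q em ep ‖Q‖ := by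
    rw [← bF_sq hem]
    exact mul_le_mul hbu hbv hbT.le (bF_pos hem _).le
  have w2 : (1/2)*bF q em ep (‖P‖+‖Q‖)*(‖P‖-‖Q‖) ≤ chiF q em ep ‖P‖ - chiF q em ep ‖Q‖ := by
    have h1 := chi_lower hq1 hq2 hem hee hv hvu
    have h2 : (1/2)*bF q em ep (‖P‖+‖Q‖)*(‖P‖-‖Q‖) ≤ (q/2)*bF q em ep ‖P‖*(‖P‖-‖Q‖) := by
      have hb : (1/2)*bF q em ep (‖P‖+‖Q‖) ≤ (q/2)*bF q em ep ‖P‖ := by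
        nlinarith [bF_pos (q := q) (em := em) (ep := ep) hem ‖P‖]
      exact mul_le_mul_of_nonneg_right hb (by linarith)
    linarith
  have w2' : ((1/2)*bF q em ep (‖P‖+‖Q‖)*(‖P‖-‖Q‖))^2
      ≤ (chiF q em ep ‖P‖ - chiF q em ep ‖Q‖)^2 :=
    pow_le_pow_left₀ (mul_nonneg (mul_nonneg (by norm_num) hbT.le) (by linarith)) w2 2
  have w4 : (1/4)*(aF q em ep (‖P‖+‖Q‖))*(‖P‖-‖Q‖)^2
      ≤ (chiF q em ep ‖P‖ - chiF q em ep ‖Q‖)^2 := by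
    have w2'' : ((1/2)*bF q em ep (‖P‖+‖Q‖)*(‖P‖-‖Q‖))^2
        = (1/4)*(aF q em ep (‖P‖+‖Q‖))*(‖P‖-‖Q‖)^2 := by
      rw [← bF_sq (q := q) hem]; ring
    rw [← w2'']; exact w2'
  have w3 : 2*(aF q em ep (‖P‖+‖Q‖))*(‖P‖*‖Q‖ - ⟪P,Q⟫)
      ≤ 2*(bF q em ep ‖P‖ * bF q em ep ‖Q‖)*(‖P‖*‖Q‖ - ⟪P,Q⟫) :=
    mul_le_mul_of_nonneg_right (by linarith) hcs
  have p2 : 0 ≤ aF q em ep (‖P‖+‖Q‖) * (‖P‖*‖Q‖ - ⟪P,Q⟫) :=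
    mul_nonneg (aF_pos hem _).le hcs
  rw [expand_V hem, expand_normsq]
  linarith [w3, w4, p2]

end Stmt9Aux


namespace Stmt9Aux

variable {q em ep : ℝ} {d : ℕ}

lemma pwupV_aux (hq1 : 1 < q) (hq2 : q < 2) (hem : 0 < em) (hee : em ≤ ep)
    (P Q : EuclideanSpace ℝ (Fin d)) (hvu : ‖Q‖ ≤ ‖P‖) :
    ‖Vstar q em ep P - Vstar q em ep Q‖^2
      ≤ 14 * (aF q em ep (‖P‖+‖Q‖) * ‖P-Q‖^2) := by
  have hu : (0:ℝ) ≤ ‖P‖ := norm_nonneg P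
  have hv : (0:ℝ) ≤ ‖Q‖ := norm_nonneg Q
  rcases eq_or_lt_of_le (by linarith : (0:ℝ) ≤ ‖P‖ + ‖Q‖) with hT | hT
  · have hP : P = 0 := norm_eq_zero.1 (by linarith)
    have hQ : Q = 0 := norm_eq_zero.1 (by linarith)
    simp [hP, hQ]
  · have hcs := cs_nonneg P Q
    have haT : 0 < aF q em ep (‖P‖+‖Q‖) := aF_pos hem _
    have hchi0 : 0 ≤ chiF q em ep ‖P‖ - chiF q em ep ‖Q‖ :=
      sub_nonneg.2 (chi_mono hq1 hq2 hem hee hv hvu)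
    have heq := expand_normsq P Q
    rcases le_total ‖P‖ (4*‖Q‖) with h4 | h4
    · have hav := aF_five hq1 hq2 hem hee hu hT h4
      have c1 : (chiF q em ep ‖P‖ - chiF q em ep ‖Q‖)^2
          ≤ aF q em ep ‖Q‖*(‖P‖-‖Q‖)^2 := by
        have h1 := chi_upper (ep := ep) hq2 hem hv hvu
        have h2 := pow_le_pow_left₀ hchi0 h1 2
        calc (chiF q em ep ‖P‖ - chiF q em ep ‖Q‖)^2
            ≤ (bF q em ep ‖Q‖*(‖P‖-‖Q‖))^2 := h2
          _ = aF q em ep ‖Q‖*(‖P‖-‖Q‖)^2 := by rw [← bF_sq (q := q) hem]; ring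
      have c2 : 2*(bF q em ep ‖P‖*bF q em ep ‖Q‖)*(‖P‖*‖Q‖ - ⟪P,Q⟫)
          ≤ (2*aF q em ep ‖Q‖)*(‖P‖*‖Q‖ - ⟪P,Q⟫) := by
        have hb2 : bF q em ep ‖P‖ * bF q em ep ‖Q‖ ≤ aF q em ep ‖Q‖ := by
          rw [← bF_sq (q := q) hem]
          exact mul_le_mul_of_nonneg_right (bF_anti hq2 hem hvu) (bF_pos hem _).le
        exact mul_le_mul_of_nonneg_right (by linarith) hcs
      have m1 : aF q em ep ‖Q‖*(‖P‖-‖Q‖)^2 ≤ (5*aF q em ep (‖P‖+‖Q‖))*(‖P‖-‖Q‖)^2 :=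
        mul_le_mul_of_nonneg_right hav (sq_nonneg _)
      have m2 : (2*aF q em ep ‖Q‖)*(‖P‖*‖Q‖ - ⟪P,Q⟫)
          ≤ (10*aF q em ep (‖P‖+‖Q‖))*(‖P‖*‖Q‖ - ⟪P,Q⟫) :=
        mul_le_mul_of_nonneg_right (by linarith) hcs
      have p1 : 0 ≤ aF q em ep (‖P‖+‖Q‖)*(‖P‖-‖Q‖)^2 := mul_nonneg haT.le (sq_nonneg _)
      have p2 : 0 ≤ aF q em ep (‖P‖+‖Q‖)*(‖P‖*‖Q‖ - ⟪P,Q⟫) := mul_nonneg haT.le hcs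
      rw [expand_V hem, expand_normsq]
      linarith
    · have hd : ‖P‖ - ‖Q‖ ≤ ‖P - Q‖ := norm_sub_norm_le P Q
      have hdelta : (3/5*(‖P‖+‖Q‖))^2 ≤ ‖P-Q‖^2 := by
        have h35 : 3/5*(‖P‖+‖Q‖) ≤ ‖P-Q‖ := by linarith
        exact pow_le_pow_left₀ (by linarith) h35 2
      have hchiu : chiF q em ep ‖P‖ ≤ chiF q em ep (‖P‖+‖Q‖) :=
        chi_mono hq1 hq2 hem hee hu (by linarith)
      have hchiv : chiF q em ep ‖Q‖ ≤ chiF q em ep (‖P‖+‖Q‖) :=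
        chi_mono hq1 hq2 hem hee hv (by linarith)
      have hchiv0 : 0 ≤ chiF q em ep ‖Q‖ := mul_nonneg (bF_pos hem _).le hv
      have hchiT0 : 0 ≤ chiF q em ep (‖P‖+‖Q‖) := mul_nonneg (bF_pos hem _).le (by linarith)
      have e3 : (chiF q em ep (‖P‖+‖Q‖))^2 = aF q em ep (‖P‖+‖Q‖) * (‖P‖+‖Q‖)^2 := by
        simp only [chiF]; rw [← bF_sq (q := q) hem]; ring
      have c1 : (chiF q em ep ‖P‖ - chiF q em ep ‖Q‖)^2
          ≤ aF q em ep (‖P‖+‖Q‖) * (‖P‖+‖Q‖)^2 := by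
        have e1 : chiF q em ep ‖P‖ - chiF q em ep ‖Q‖ ≤ chiF q em ep (‖P‖+‖Q‖) := by linarith
        have e2 := pow_le_pow_left₀ hchi0 e1 2
        rw [e3] at e2; exact e2
      have c2 : 2*(bF q em ep ‖P‖*bF q em ep ‖Q‖)*(‖P‖*‖Q‖ - ⟪P,Q⟫)
          ≤ 4*(aF q em ep (‖P‖+‖Q‖) * (‖P‖+‖Q‖)^2) := by
        have hY2 : ‖P‖*‖Q‖ - ⟪P,Q⟫ ≤ 2*(‖P‖*‖Q‖) := by nlinarith [cs_abs P Q]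
        have hbb : 0 ≤ 2*(bF q em ep ‖P‖*bF q em ep ‖Q‖) :=
          mul_nonneg (by norm_num) (mul_nonneg (bF_pos hem _).le (bF_pos hem _).le)
        calc 2*(bF q em ep ‖P‖*bF q em ep ‖Q‖)*(‖P‖*‖Q‖ - ⟪P,Q⟫)
            ≤ 2*(bF q em ep ‖P‖*bF q em ep ‖Q‖)*(2*(‖P‖*‖Q‖)) :=
              mul_le_mul_of_nonneg_left hY2 hbb
          _ = 4*(chiF q em ep ‖P‖ * chiF q em ep ‖Q‖) := by simp only [chiF]; ring
          _ ≤ 4*(chiF q em ep (‖P‖+‖Q‖) * chiF q em ep (‖P‖+‖Q‖)) := by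
              have := mul_le_mul hchiu hchiv hchiv0 hchiT0
              linarith
          _ = 4*(aF q em ep (‖P‖+‖Q‖) * (‖P‖+‖Q‖)^2) := by
              rw [← e3]; ring
      have mm : aF q em ep (‖P‖+‖Q‖) * (‖P‖+‖Q‖)^2
          ≤ 25/9*(aF q em ep (‖P‖+‖Q‖)*‖P-Q‖^2) := by nlinarith [haT.le, hdelta]
      have p3 : 0 ≤ aF q em ep (‖P‖+‖Q‖)*‖P-Q‖^2 := mul_nonneg haT.le (sq_nonneg _)
      rw [expand_V hem]
      linarith

/-- symmetric versions -/
lemma pwup (hq1 : 1 < q) (hq2 : q < 2) (hem : 0 < em) (hee : em ≤ ep)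
    (P Q : EuclideanSpace ℝ (Fin d)) :
    ⟪Astar q em ep P - Astar q em ep Q, P - Q⟫
      ≤ 6 * (aF q em ep (‖P‖+‖Q‖) * ‖P-Q‖^2) := by
  rcases le_total ‖Q‖ ‖P‖ with h | h
  · exact pwup_aux hq1 hq2 hem hee P Q h
  · have h0 := pwup_aux hq1 hq2 hem hee Q P h
    have e1 : ⟪Astar q em ep Q - Astar q em ep P, Q - P⟫
        = ⟪Astar q em ep P - Astar q em ep Q, P - Q⟫ := by
      rw [← neg_sub (Astar q em ep P) (Astar q em ep Q), ← neg_sub P Q, inner_neg_neg]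
    rw [e1, norm_sub_rev Q P, add_comm ‖Q‖ ‖P‖] at h0
    exact h0

lemma pwlowV (hq1 : 1 < q) (hq2 : q < 2) (hem : 0 < em) (hee : em ≤ ep)
    (P Q : EuclideanSpace ℝ (Fin d)) :
    (1/4) * (aF q em ep (‖P‖+‖Q‖) * ‖P-Q‖^2)
      ≤ ‖Vstar q em ep P - Vstar q em ep Q‖^2 := by
  rcases le_total ‖Q‖ ‖P‖ with h | h
  · exact pwlowV_aux hq1 hq2 hem hee P Q h
  · have h0 := pwlowV_aux hq1 hq2 hem hee Q P h
    rw [norm_sub_rev Q P, add_comm ‖Q‖ ‖P‖,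
      norm_sub_rev (Vstar q em ep Q) (Vstar q em ep P)] at h0
    exact h0

lemma pwupV (hq1 : 1 < q) (hq2 : q < 2) (hem : 0 < em) (hee : em ≤ ep)
    (P Q : EuclideanSpace ℝ (Fin d)) :
    ‖Vstar q em ep P - Vstar q em ep Q‖^2
      ≤ 14 * (aF q em ep (‖P‖+‖Q‖) * ‖P-Q‖^2) := by
  rcases le_total ‖Q‖ ‖P‖ with h | h
  · exact pwupV_aux hq1 hq2 hem hee P Q h
  · have h0 := pwupV_aux hq1 hq2 hem hee Q P h
    rw [norm_sub_rev Q P, add_comm ‖Q‖ ‖P‖,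
      norm_sub_rev (Vstar q em ep Q) (Vstar q em ep P)] at h0
    exact h0

/-! growth bounds for integrability -/

lemma aF_le_em (hq2 : q < 2) (hem : 0 < em) (t : ℝ) : aF q em ep t ≤ em^(q-2) :=
  Real.rpow_le_rpow_of_nonpos hem (le_max_left _ _) (by linarith)

lemma kappa_nonneg (hq1 : 1 < q) (hq2 : q < 2) (hem : 0 < em) (hee : em ≤ ep)
    {t : ℝ} (ht : 0 ≤ t) : 0 ≤ kappaStar q em ep t := by
  have hq0 : (0:ℝ) < q := by linarith
  have hcoef : (0:ℝ) ≤ 1/q - 1/2 := by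
    rw [sub_nonneg, div_le_div_iff₀ (by norm_num) hq0]; linarith
  have hp : (0:ℝ) < ep := lt_of_lt_of_le hem hee
  unfold kappaStar
  split_ifs with h1 h2
  · exact add_nonneg (mul_nonneg (mul_nonneg (by norm_num)
      (Real.rpow_nonneg hem.le _)) (sq_nonneg t))
      (mul_nonneg hcoef (Real.rpow_nonneg hem.le _))
  · exact mul_nonneg (by positivity) (Real.rpow_nonneg ht _)
  · exact add_nonneg (mul_nonneg (mul_nonneg (by norm_num)
      (Real.rpow_nonneg hp.le _)) (sq_nonneg t))
      (mul_nonneg hcoef (Real.rpow_nonneg hp.le _))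

lemma kappa_le_quad (hq1 : 1 < q) (hq2 : q < 2) (hem : 0 < em) (hee : em ≤ ep)
    {t : ℝ} (ht : 0 ≤ t) :
    kappaStar q em ep t ≤ (1/q)*em^q + em^(q-2)*t^2 := by
  have hq0 : (0:ℝ) < q := by linarith
  have hp : (0:ℝ) < ep := lt_of_lt_of_le hem hee
  have h1q : (1:ℝ)/q ≤ 1 := by rw [div_le_one hq0]; linarith
  have hemq : (0:ℝ) ≤ em^q := Real.rpow_nonneg hem.le _
  have hem2 : (0:ℝ) ≤ em^(q-2) := Real.rpow_nonneg hem.le _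
  unfold kappaStar
  split_ifs with h1 h2
  · have e1 : (1/q - 1/2)*em^q ≤ (1/q)*em^q :=
      mul_le_mul_of_nonneg_right (by linarith) hemq
    nlinarith [mul_nonneg hem2 (sq_nonneg t)]
  · have ht0 : (0:ℝ) < t := lt_of_lt_of_le hem (le_of_not_ge h1)
    have htq : t^q = t^(q-2)*t^2 := by
      rw [← Real.rpow_natCast t 2, ← Real.rpow_add ht0]; norm_num
    have h2' : t^(q-2) ≤ em^(q-2) :=
      Real.rpow_le_rpow_of_nonpos hem (le_of_not_ge h1) (by linarith)
    have h3 : (1/q)*t^q ≤ 1*t^q :=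
      mul_le_mul_of_nonneg_right h1q (Real.rpow_nonneg ht0.le _)
    have h4 : t^(q-2)*t^2 ≤ em^(q-2)*t^2 := mul_le_mul_of_nonneg_right h2' (sq_nonneg t)
    have h5 : (0:ℝ) ≤ (1/q)*em^q := mul_nonneg (by positivity) hemq
    nlinarith
  · have htp : ep < t := lt_of_not_ge h2
    have e1 : ep^(q-2) ≤ em^(q-2) := Real.rpow_le_rpow_of_nonpos hem hee (by linarith)
    have e2 : ep^q = ep^(q-2)*ep^2 := by
      rw [← Real.rpow_natCast ep 2, ← Real.rpow_add hp]; norm_num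
    have e3 : ep^2 ≤ t^2 := pow_le_pow_left₀ hp.le htp.le 2
    have ep2 : (0:ℝ) ≤ ep^(q-2) := Real.rpow_nonneg hp.le _
    have hcoef : (0:ℝ) ≤ 1/q - 1/2 := by
      rw [sub_nonneg, div_le_div_iff₀ (by norm_num) hq0]; linarith
    have s1 : (1/2)*ep^(q-2)*t^2 ≤ (1/2)*em^(q-2)*t^2 := by
      nlinarith [sq_nonneg t]
    have s2 : (1/q - 1/2)*ep^q ≤ (1/q - 1/2)*(em^(q-2)*t^2) := by
      rw [e2]
      have u1 : ep^(q-2)*ep^2 ≤ ep^(q-2)*t^2 := mul_le_mul_of_nonneg_left e3 ep2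
      have u2 : ep^(q-2)*t^2 ≤ em^(q-2)*t^2 := mul_le_mul_of_nonneg_right e1 (sq_nonneg t)
      exact mul_le_mul_of_nonneg_left (u1.trans u2) hcoef
    nlinarith [mul_nonneg hem2 (sq_nonneg t)]

lemma normA_le (hq2 : q < 2) (hem : 0 < em) (P : EuclideanSpace ℝ (Fin d)) :
    ‖Astar q em ep P‖ ≤ em^(q-2)*‖P‖ := by
  rw [Astar_eq, norm_smul, Real.norm_eq_abs, abs_of_pos (aF_pos hem _)]
  exact mul_le_mul_of_nonneg_right (aF_le_em hq2 hem _) (norm_nonneg P)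

lemma normV_sq_le (hq2 : q < 2) (hem : 0 < em) (P : EuclideanSpace ℝ (Fin d)) :
    ‖Vstar q em ep P‖^2 ≤ em^(q-2)*‖P‖^2 := by
  have e : ‖Vstar q em ep P‖ = bF q em ep ‖P‖ * ‖P‖ := by
    rw [Vstar_eq, norm_smul, Real.norm_eq_abs, abs_of_pos (bF_pos hem _)]
  rw [e]
  have e2 : (bF q em ep ‖P‖ * ‖P‖)^2 = aF q em ep ‖P‖ * ‖P‖^2 := by
    rw [← bF_sq (q := q) hem]; ring
  rw [e2]
  exact mul_le_mul_of_nonneg_right (aF_le_em hq2 hem _) (sq_nonneg _)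

end Stmt9Aux


namespace Stmt9Aux

variable {q em ep : ℝ} {d : ℕ}

lemma inner_A_bound (hq2 : q < 2) (hem : 0 < em) (P Q : EuclideanSpace ℝ (Fin d)) :
    |⟪Astar q em ep P, P - Q⟫| ≤ 2*em^(q-2)*(‖Q‖^2+‖P‖^2) := by
  have h1 : |⟪Astar q em ep P, P-Q⟫| ≤ ‖Astar q em ep P‖*‖P-Q‖ := abs_real_inner_le_norm _ _
  have h2 := normA_le (ep := ep) hq2 hem P
  have h3 : ‖P-Q‖ ≤ ‖P‖+‖Q‖ := norm_sub_le P Q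
  have hem2 : (0:ℝ) ≤ em^(q-2) := Real.rpow_nonneg hem.le _
  have h4 : ‖Astar q em ep P‖*‖P-Q‖ ≤ (em^(q-2)*‖P‖)*(‖P‖+‖Q‖) :=
    mul_le_mul h2 h3 (norm_nonneg _) (by positivity)
  nlinarith [mul_nonneg hem2 (sq_nonneg (‖P‖-‖Q‖)), mul_nonneg hem2 (sq_nonneg ‖P‖),
    mul_nonneg hem2 (sq_nonneg ‖Q‖)]

lemma inner_A_bound' (hq2 : q < 2) (hem : 0 < em) (P Q : EuclideanSpace ℝ (Fin d)) :
    |⟪Astar q em ep Q, P - Q⟫| ≤ 2*em^(q-2)*(‖Q‖^2+‖P‖^2) := by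
  have h1 : |⟪Astar q em ep Q, P-Q⟫| ≤ ‖Astar q em ep Q‖*‖P-Q‖ := abs_real_inner_le_norm _ _
  have h2 := normA_le (ep := ep) hq2 hem Q
  have h3 : ‖P-Q‖ ≤ ‖P‖+‖Q‖ := norm_sub_le P Q
  have hem2 : (0:ℝ) ≤ em^(q-2) := Real.rpow_nonneg hem.le _
  have h4 : ‖Astar q em ep Q‖*‖P-Q‖ ≤ (em^(q-2)*‖Q‖)*(‖P‖+‖Q‖) :=
    mul_le_mul h2 h3 (norm_nonneg _) (by positivity)
  nlinarith [mul_nonneg hem2 (sq_nonneg (‖P‖-‖Q‖)), mul_nonneg hem2 (sq_nonneg ‖P‖),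
    mul_nonneg hem2 (sq_nonneg ‖Q‖)]

lemma normVdiff_sq_le (hq2 : q < 2) (hem : 0 < em) (P Q : EuclideanSpace ℝ (Fin d)) :
    ‖Vstar q em ep P - Vstar q em ep Q‖^2 ≤ 2*em^(q-2)*(‖Q‖^2+‖P‖^2) := by
  have h1 : ‖Vstar q em ep P - Vstar q em ep Q‖ ≤ ‖Vstar q em ep P‖+‖Vstar q em ep Q‖ :=
    norm_sub_le _ _
  have h2 := pow_le_pow_left₀ (norm_nonneg _) h1 2
  have h3 := normV_sq_le (ep := ep) hq2 hem P
  have h4 := normV_sq_le (ep := ep) hq2 hem Q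
  nlinarith [sq_nonneg (‖Vstar q em ep P‖ - ‖Vstar q em ep Q‖)]

lemma aF_cont (hq2 : q < 2) (hem : 0 < em) : Continuous (aF q em ep) := by
  unfold aF gc
  exact (continuous_const.max (continuous_id.min continuous_const)).rpow_const
    fun t => Or.inl (ne_of_gt (lt_of_lt_of_le hem (le_max_left _ _)))

lemma bF_cont (hq2 : q < 2) (hem : 0 < em) : Continuous (bF q em ep) := by
  unfold bF gc
  exact (continuous_const.max (continuous_id.min continuous_const)).rpow_const
    fun t => Or.inl (ne_of_gt (lt_of_lt_of_le hem (le_max_left _ _)))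

end Stmt9Aux



open Stmt9Aux

/-- natural distance. For `1 < q < 2` there are constants `0 < c ≤ C < ∞`
depending solely on `q` (independent of `ε`) such that: whenever `Ω ⊂ ℝ^d` is measurable of
finite measure and `σ_ε, τ ∈ L²(Ω;ℝ^d)` satisfy the Euler–Lagrange orthogonality
`∫_Ω A*_ε(σ_ε)·(τ - σ_ε) dx = 0`, one has
`J*_ε(τ) - J*_ε(σ_ε) ≤ ∫_Ω (A*_ε(τ)-A*_ε(σ_ε))·(τ-σ_ε) dx ≤ C ∫_Ω |V*_ε(τ)-V*_ε(σ_ε)|² dx`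
and `c ∫_Ω |V*_ε(τ)-V*_ε(σ_ε)|² dx ≤ J*_ε(τ) - J*_ε(σ_ε)`. -/
theorem stmt9 (q : ℝ) (hq1 : 1 < q) (hq2 : q < 2) :
    ∃ c C : ℝ, 0 < c ∧ c ≤ C ∧
      ∀ (d : ℕ) (em ep : ℝ), 0 < em → em ≤ ep →
        ∀ (Ω : Set (EuclideanSpace ℝ (Fin d))), MeasurableSet Ω → volume Ω < ⊤ →
          ∀ (σe τ : EuclideanSpace ℝ (Fin d) → EuclideanSpace ℝ (Fin d)),
            Measurable σe → Measurable τ →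
            IntegrableOn (fun x => ‖σe x‖ ^ 2) Ω volume →
            IntegrableOn (fun x => ‖τ x‖ ^ 2) Ω volume →
            (∫ x in Ω, ⟪Astar q em ep (σe x), τ x - σe x⟫) = 0 →
            (Jeps q em ep Ω τ - Jeps q em ep Ω σe
                ≤ ∫ x in Ω, ⟪Astar q em ep (τ x) - Astar q em ep (σe x), τ x - σe x⟫) ∧
            ((∫ x in Ω, ⟪Astar q em ep (τ x) - Astar q em ep (σe x), τ x - σe x⟫)
                ≤ C * ∫ x in Ω, ‖Vstar q em ep (τ x) - Vstar q em ep (σe x)‖ ^ 2) ∧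
            (c * (∫ x in Ω, ‖Vstar q em ep (τ x) - Vstar q em ep (σe x)‖ ^ 2)
                ≤ Jeps q em ep Ω τ - Jeps q em ep Ω σe) := by
  refine ⟨(q-1)/28, 24, div_pos (by linarith) (by norm_num), by linarith, ?_⟩
  intro d em ep hem hee Ω hΩ hfin σe τ hσm hτm hσ2 hτ2 horth
  -- measurability
  have hκc : Continuous (kappaStar q em ep) :=
    continuous_iff_continuousAt.2 fun t => (hasDerivAt_kappa hq1 hem hee t).continuousAt
  have hAτm : Measurable fun x => Astar q em ep (τ x) :=
    (((aF_cont hq2 hem).measurable).comp hτm.norm).smul hτm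
  have hAσm : Measurable fun x => Astar q em ep (σe x) :=
    (((aF_cont hq2 hem).measurable).comp hσm.norm).smul hσm
  have hVτm : Measurable fun x => Vstar q em ep (τ x) :=
    (((bF_cont hq2 hem).measurable).comp hτm.norm).smul hτm
  have hVσm : Measurable fun x => Vstar q em ep (σe x) :=
    (((bF_cont hq2 hem).measurable).comp hσm.norm).smul hσm
  have hδm : Measurable fun x => τ x - σe x := hτm.sub hσm
  have hfAτm : Measurable fun x => (⟪Astar q em ep (τ x), τ x - σe x⟫ : ℝ) :=
    hAτm.inner hδm
  have hfAσm : Measurable fun x => (⟪Astar q em ep (σe x), τ x - σe x⟫ : ℝ) :=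
    hAσm.inner hδm
  have hfDm : Measurable fun x =>
      (⟪Astar q em ep (τ x) - Astar q em ep (σe x), τ x - σe x⟫ : ℝ) :=
    (hAτm.sub hAσm).inner hδm
  have hfVm : Measurable fun x => ‖Vstar q em ep (τ x) - Vstar q em ep (σe x)‖^2 :=
    ((hVτm.sub hVσm).norm).pow_const 2
  -- integrability
  have hem2 : (0:ℝ) ≤ em^(q-2) := Real.rpow_nonneg hem.le _
  have hconst : IntegrableOn (fun _ => (1/q)*em^q) Ω volume :=
    integrableOn_const hfin.ne
  have i2 : IntegrableOn (fun x => ‖σe x‖^2 + ‖τ x‖^2) Ω volume := hσ2.add hτ2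
  have iκτ : IntegrableOn (fun x => kappaStar q em ep ‖τ x‖) Ω volume := by
    refine Integrable.mono' (hconst.add (hτ2.const_mul (em^(q-2))))
      ((hκc.measurable.comp hτm.norm).aestronglyMeasurable) (ae_of_all _ fun x => ?_)
    rw [Real.norm_eq_abs, abs_of_nonneg (kappa_nonneg hq1 hq2 hem hee (norm_nonneg _))]
    exact kappa_le_quad hq1 hq2 hem hee (norm_nonneg _)
  have iκσ : IntegrableOn (fun x => kappaStar q em ep ‖σe x‖) Ω volume := by
    refine Integrable.mono' (hconst.add (hσ2.const_mul (em^(q-2))))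
      ((hκc.measurable.comp hσm.norm).aestronglyMeasurable) (ae_of_all _ fun x => ?_)
    rw [Real.norm_eq_abs, abs_of_nonneg (kappa_nonneg hq1 hq2 hem hee (norm_nonneg _))]
    exact kappa_le_quad hq1 hq2 hem hee (norm_nonneg _)
  have iAτ : IntegrableOn (fun x => (⟪Astar q em ep (τ x), τ x - σe x⟫:ℝ)) Ω volume := by
    refine Integrable.mono' (i2.const_mul (2*em^(q-2)))
      hfAτm.aestronglyMeasurable (ae_of_all _ fun x => ?_)
    rw [Real.norm_eq_abs]
    exact inner_A_bound hq2 hem (τ x) (σe x)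
  have iAσ : IntegrableOn (fun x => (⟪Astar q em ep (σe x), τ x - σe x⟫:ℝ)) Ω volume := by
    refine Integrable.mono' (i2.const_mul (2*em^(q-2)))
      hfAσm.aestronglyMeasurable (ae_of_all _ fun x => ?_)
    rw [Real.norm_eq_abs]
    exact inner_A_bound' hq2 hem (τ x) (σe x)
  have iV : IntegrableOn (fun x => ‖Vstar q em ep (τ x) - Vstar q em ep (σe x)‖^2) Ω volume := by
    refine Integrable.mono' (i2.const_mul (2*em^(q-2)))
      hfVm.aestronglyMeasurable (ae_of_all _ fun x => ?_)
    rw [Real.norm_eq_abs, abs_of_nonneg (sq_nonneg _)]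
    exact normVdiff_sq_le hq2 hem (τ x) (σe x)
  have hDeq : (fun x => (⟪Astar q em ep (τ x) - Astar q em ep (σe x), τ x - σe x⟫:ℝ))
      = fun x => (⟪Astar q em ep (τ x), τ x - σe x⟫:ℝ)
          - (⟪Astar q em ep (σe x), τ x - σe x⟫:ℝ) :=
    funext fun x => by rw [inner_sub_left]
  have iD : IntegrableOn
      (fun x => (⟪Astar q em ep (τ x) - Astar q em ep (σe x), τ x - σe x⟫:ℝ)) Ω volume := by
    rw [hDeq]; exact iAτ.sub iAσ
  -- integral identities
  have hJsub : Jeps q em ep Ω τ - Jeps q em ep Ω σe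
      = ∫ x in Ω, (kappaStar q em ep ‖τ x‖ - kappaStar q em ep ‖σe x‖) := by
    simp only [Jeps]
    rw [integral_sub iκτ iκσ]
  have hDint : (∫ x in Ω, (⟪Astar q em ep (τ x) - Astar q em ep (σe x), τ x - σe x⟫:ℝ))
      = ∫ x in Ω, (⟪Astar q em ep (τ x), τ x - σe x⟫:ℝ) := by
    rw [hDeq, integral_sub iAτ iAσ, horth, sub_zero]
  -- inequality 1
  have ineq1 : Jeps q em ep Ω τ - Jeps q em ep Ω σe
      ≤ ∫ x in Ω, (⟪Astar q em ep (τ x) - Astar q em ep (σe x), τ x - σe x⟫:ℝ) := by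
    rw [hJsub, hDint]
    exact setIntegral_mono_on (iκτ.sub iκσ) iAτ hΩ
      (fun x _ => pw1 hq1 hq2 hem hee (τ x) (σe x))
  -- inequality 2
  have ineq2 : (∫ x in Ω, (⟪Astar q em ep (τ x) - Astar q em ep (σe x), τ x - σe x⟫:ℝ))
      ≤ 24 * ∫ x in Ω, ‖Vstar q em ep (τ x) - Vstar q em ep (σe x)‖^2 := by
    rw [← integral_const_mul]
    refine setIntegral_mono_on iD (iV.const_mul 24) hΩ (fun x _ => ?_)
    have h1 := pwup hq1 hq2 hem hee (τ x) (σe x)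
    have h2 := pwlowV hq1 hq2 hem hee (τ x) (σe x)
    linarith
  -- inequality 3
  have ineq3 : (q-1)/28 * (∫ x in Ω, ‖Vstar q em ep (τ x) - Vstar q em ep (σe x)‖^2)
      ≤ Jeps q em ep Ω τ - Jeps q em ep Ω σe := by
    have hmono : (∫ x in Ω, (q-1)/28 * ‖Vstar q em ep (τ x) - Vstar q em ep (σe x)‖^2)
        ≤ ∫ x in Ω, ((kappaStar q em ep ‖τ x‖ - kappaStar q em ep ‖σe x‖)
            - ⟪Astar q em ep (σe x), τ x - σe x⟫) := by
      refine setIntegral_mono_on (iV.const_mul _) ((iκτ.sub iκσ).sub iAσ) hΩ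
        (fun x _ => ?_)
      have h1 := pw3 hq1 hq2 hem hee (τ x) (σe x)
      have h2 := pwupV hq1 hq2 hem hee (τ x) (σe x)
      have h3 : (q-1)/28 * ‖Vstar q em ep (τ x) - Vstar q em ep (σe x)‖^2
          ≤ (q-1)/2 * (aF q em ep (‖τ x‖ + ‖σe x‖) * ‖τ x - σe x‖^2) := by
        have h4 : (q-1)/28 * ‖Vstar q em ep (τ x) - Vstar q em ep (σe x)‖^2
            ≤ (q-1)/28 * (14 * (aF q em ep (‖τ x‖ + ‖σe x‖) * ‖τ x - σe x‖^2)) :=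
          mul_le_mul_of_nonneg_left h2 (by linarith)
        linarith
      linarith
    rw [integral_const_mul] at hmono
    have hrhs : (∫ x in Ω, ((kappaStar q em ep ‖τ x‖ - kappaStar q em ep ‖σe x‖)
            - ⟪Astar q em ep (σe x), τ x - σe x⟫))
        = Jeps q em ep Ω τ - Jeps q em ep Ω σe := by
      have iκsub : IntegrableOn
          (fun x => kappaStar q em ep ‖τ x‖ - kappaStar q em ep ‖σe x‖) Ω volume :=
        iκτ.sub iκσ
      rw [integral_sub iκsub iAσ, horth, sub_zero, ← hJsub]
    rw [hrhs] at hmono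
    exact hmono
  exact ⟨ineq1, ineq2, ineq3⟩


end Stmt9AuxSection
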